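/- Let B ⊑ B̂ be a fragment extension of bridges such that B̂ satisfies (sur) and B satisfies (mon). Then B ⊑ B̂ satisfies (wm): for all M ⊨ T₂ and N ⊨ T₁ with Th_{L₁}(N) ⊆ Th_{L₁}(σM), there exists M' ⊨ T₂ with Th_{L̂₁}(σM') = Th_{L̂₁}(N) and Th_{L₂}(M') ⊆ Th_{L₂}(M). -/
import Mathlib


open FirstOrder Set

universe u v w u₁ v₁ u₂ v₂

namespace PaperStmt

/-- An `𝔏`-fragment: a set of `𝔏`-sentences containing `⊤` and `⊥` and
closed under `∧` and `∨`. -/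
def IsFragment {L : FirstOrder.Language.{u, v}} (F : Set L.Sentence) : Prop :=
  (⊤ : L.Sentence) ∈ F ∧ (⊥ : L.Sentence) ∈ F ∧
    ∀ φ ψ : L.Sentence, φ ∈ F → ψ ∈ F → (φ ⊓ ψ) ∈ F ∧ (φ ⊔ ψ) ∈ F

/-- `T_F = T^⊢ ∩ F`: the consequences of the theory `T` that lie in the fragment `F`. -/
def cons {L : FirstOrder.Language.{u, v}} (T : L.Theory) (F : Set L.Sentence) :
    Set L.Sentence :=
  {φ | φ ∈ F ∧ T ⊨ᵇ φ}

/-- Bundled models of `T` (in the universe matching semantic consequence `⊨ᵇ`). -/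
abbrev Mod {L : FirstOrder.Language.{u, v}} (T : L.Theory) : Type (max u v + 1) :=
  FirstOrder.Language.Theory.ModelType.{u, v, max u v} T

/-- `Th_F(M)`: the sentences in the fragment `F` true in the model `M`. -/
def th {L : FirstOrder.Language.{u, v}} {T : L.Theory} (F : Set L.Sentence) (M : Mod T) :
    Set L.Sentence :=
  {φ | φ ∈ F ∧ M ⊨ φ}

/-- a fragment extension `B ⊑ B̂` of bridges such that `B̂` satisfies (sur)
and `B` satisfies (mon) satisfies (wm). -/
theorem statement_8 {L₁ : FirstOrder.Language.{u₁, v₁}} {L₂ : FirstOrder.Language.{u₂, v₂}}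
    {F₁ Fh₁ : Set L₁.Sentence} {F₂ Fh₂ : Set L₂.Sentence} {T₁ : L₁.Theory} {T₂ : L₂.Theory}
    (hF₁ : IsFragment F₁) (hF₂ : IsFragment F₂) (hFh₁ : IsFragment Fh₁) (hFh₂ : IsFragment Fh₂)
    (hsub₁ : F₁ ⊆ Fh₁) (hsub₂ : F₂ ⊆ Fh₂)
    (σ : Mod T₂ → Mod T₁)
    (hsur : ∀ N : Mod T₁, ∃ M : Mod T₂, th Fh₁ N = th Fh₁ (σ M))
    (hmon : ∀ M M' : Mod T₂, th F₁ (σ M) ⊆ th F₁ (σ M') → th F₂ M ⊆ th F₂ M') :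
    ∀ (M : Mod T₂) (N : Mod T₁), th F₁ N ⊆ th F₁ (σ M) →
      ∃ M' : Mod T₂, th Fh₁ (σ M') = th Fh₁ N ∧ th F₂ M' ⊆ th F₂ M := by
  intro M N hNM
  obtain ⟨M', hM'⟩ := hsur N
  refine ⟨M', hM'.symm, hmon M' M ?_⟩
  intro φ hφ
  exact hNM (by have : φ ∈ th Fh₁ (σ M') := ⟨hsub₁ hφ.1, hφ.2⟩
                rw [← hM'] at this
                exact ⟨hφ.1, this.2⟩)

end PaperStmt
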